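/- For every invertible n × n complex matrix E, the matrix S_E = E · (E^T)^{-1} is similar to its inverse: there exists an invertible n × n complex matrix p with S_E^{-1} = p · S_E · p^{-1}. -/

import Mathlib

open Matrix


open Polynomial DirectSum

noncomputable section

/-- The coefficient-extraction functional on `ℂ[X] ⧸ (g)` for monic `g`. -/
def cfun (g : Polynomial ℂ) (hg : g.Monic) :
    (Polynomial ℂ ⧸ Ideal.span {g}) →ₗ[ℂ] ℂ :=
  (((Ideal.span {g}).restrictScalars ℂ).liftQ
      ((lcoeff ℂ (g.natDegree - 1)) ∘ₗ (modByMonicHom g))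
      (by
        rw [← Polynomial.ker_modByMonicHom hg]
        intro x hx
        simp only [LinearMap.mem_ker] at hx ⊢
        simp [LinearMap.comp_apply, hx])) ∘ₗ
    (Submodule.Quotient.restrictScalarsEquiv ℂ (Ideal.span {g})).symm.toLinearMap

lemma cfun_mk (g : Polynomial ℂ) (hg : g.Monic) (P : Polynomial ℂ) :
    cfun g hg (Submodule.Quotient.mk P) = (P %ₘ g).coeff (g.natDegree - 1) := by
  rw [cfun, LinearMap.comp_apply, LinearEquiv.coe_coe,
      Submodule.Quotient.restrictScalarsEquiv_symm_mk, Submodule.liftQ_apply]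
  rfl

end

noncomputable section

theorem cyclic_pairing (g : Polynomial ℂ) (hg : g.Monic) :
    ∃ B : (Polynomial ℂ ⧸ Ideal.span {g}) →ₗ[ℂ] (Polynomial ℂ ⧸ Ideal.span {g}) →ₗ[ℂ] ℂ,
      (∀ x y, B ((X : Polynomial ℂ) • x) y = B x ((X : Polynomial ℂ) • y)) ∧
      (∀ x, (∀ y, B x y = 0) → x = 0) := by
  have hmk : ∀ (p q : Polynomial ℂ),
      (p • (Submodule.Quotient.mk q : Polynomial ℂ ⧸ Ideal.span {g})) =
        Submodule.Quotient.mk (p * q) := by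
    intro p q
    rw [← Submodule.Quotient.mk_smul]
    rfl
  refine ⟨(LinearMap.mul ℂ (Polynomial ℂ ⧸ Ideal.span {g})).compr₂ (cfun g hg), ?_, ?_⟩
  · intro x y
    obtain ⟨p, rfl⟩ := Submodule.Quotient.mk_surjective _ x
    obtain ⟨q, rfl⟩ := Submodule.Quotient.mk_surjective _ y
    simp only [LinearMap.compr₂_apply, LinearMap.mul_apply', hmk]
    have : ∀ a b : Polynomial ℂ,
        (Submodule.Quotient.mk a : Polynomial ℂ ⧸ Ideal.span {g}) * Submodule.Quotient.mk b =
          Submodule.Quotient.mk (a * b) := fun a b => rfl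
    rw [this, this]
    ring_nf
  · intro x hx
    obtain ⟨P, rfl⟩ := Submodule.Quotient.mk_surjective _ x
    by_contra hne
    -- reduce to the canonical representative
    have hrep : (Submodule.Quotient.mk (P %ₘ g) : Polynomial ℂ ⧸ Ideal.span {g}) =
        Submodule.Quotient.mk P := by
      rw [Submodule.Quotient.eq]
      have h2 : P %ₘ g - P = -(g * (P /ₘ g)) := by
        rw [Polynomial.modByMonic_eq_sub_mul_div P g]; ring
      rw [h2]
      exact neg_mem (Ideal.mul_mem_right _ _ (Ideal.subset_span rfl))
    rcases Nat.eq_zero_or_pos g.natDegree with hd | hd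
    · exact hne <| (Submodule.Quotient.mk_eq_zero _).mpr <| by
        rw [hg.natDegree_eq_zero.mp hd]
        simpa using Ideal.span_singleton_one ▸ Submodule.mem_top
    · set P₁ := P %ₘ g with hP₁
      have hP₁ne : P₁ ≠ 0 := by
        intro h
        exact hne <| by rw [← hrep, h]; simp
      have hdeglt : P₁.degree < g.degree := Polynomial.degree_modByMonic_lt P hg
      have hmlt : P₁.natDegree < g.natDegree :=
        Polynomial.natDegree_lt_natDegree hP₁ne hdeglt
      set m := P₁.natDegree
      set k := g.natDegree - 1 - m with hk
      have h1 := hx (Submodule.Quotient.mk (X ^ k))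
      rw [LinearMap.compr₂_apply, LinearMap.mul_apply'] at h1
      have hmul : (Submodule.Quotient.mk P : Polynomial ℂ ⧸ Ideal.span {g}) *
          Submodule.Quotient.mk (X ^ k) = Submodule.Quotient.mk (P₁ * X ^ k) := by
      -- use the representative
        rw [← hrep]; rfl
      rw [hmul, cfun_mk] at h1
      have hdlt : (P₁ * X ^ k).degree < g.degree := by
        have hne2 : P₁ * X ^ k ≠ 0 := mul_ne_zero hP₁ne (pow_ne_zero _ Polynomial.X_ne_zero)
        have : (P₁ * X ^ k).natDegree < g.natDegree := by
          rw [Polynomial.natDegree_mul hP₁ne (pow_ne_zero _ Polynomial.X_ne_zero),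
            Polynomial.natDegree_X_pow]
          omega
        exact Polynomial.degree_lt_degree this
      rw [(Polynomial.modByMonic_eq_self_iff hg).mpr hdlt] at h1
      have hcoeff : (P₁ * X ^ k).coeff (g.natDegree - 1) = P₁.coeff m := by
        have : g.natDegree - 1 = m + k := by omega
        rw [this, Polynomial.coeff_mul_X_pow]
      rw [hcoeff, Polynomial.coeff_natDegree] at h1
      exact Polynomial.leadingCoeff_ne_zero.mpr hP₁ne h1

end

noncomputable section

theorem pairing_congr {M N : Type} [AddCommGroup M] [Module ℂ M] [Module (Polynomial ℂ) M]
    [IsScalarTower ℂ (Polynomial ℂ) M] [AddCommGroup N] [Module ℂ N] [Module (Polynomial ℂ) N]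
    [IsScalarTower ℂ (Polynomial ℂ) N] (e : M ≃ₗ[Polynomial ℂ] N)
    (h : ∃ B : N →ₗ[ℂ] N →ₗ[ℂ] ℂ, (∀ x y, B ((X : Polynomial ℂ) • x) y = B x ((X : Polynomial ℂ) • y)) ∧
      ∀ x, (∀ y, B x y = 0) → x = 0) :
    ∃ B : M →ₗ[ℂ] M →ₗ[ℂ] ℂ, (∀ x y, B ((X : Polynomial ℂ) • x) y = B x ((X : Polynomial ℂ) • y)) ∧
      ∀ x, (∀ y, B x y = 0) → x = 0 := by
  obtain ⟨B, hX, hsep⟩ := h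
  refine ⟨B.compl₁₂ (e.restrictScalars ℂ).toLinearMap (e.restrictScalars ℂ).toLinearMap, ?_, ?_⟩
  · intro x y
    simp only [LinearMap.compl₁₂_apply, LinearEquiv.coe_coe, LinearEquiv.restrictScalars_apply]
    rw [map_smul e, map_smul e, hX]
  · intro x hx
    have h0 : e x = 0 := hsep (e x) fun y => by
      obtain ⟨y', rfl⟩ := e.surjective y
      simpa using hx y'
    simpa using e.injective (by simpa using h0)

theorem pairing_directSum {ι : Type} [Fintype ι] [DecidableEq ι]
    (Q : ι → Type) [∀ i, AddCommGroup (Q i)] [∀ i, Module ℂ (Q i)]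
    [∀ i, Module (Polynomial ℂ) (Q i)] [∀ i, IsScalarTower ℂ (Polynomial ℂ) (Q i)]
    (h : ∀ i, ∃ B : Q i →ₗ[ℂ] Q i →ₗ[ℂ] ℂ, (∀ x y, B ((X : Polynomial ℂ) • x) y = B x ((X : Polynomial ℂ) • y)) ∧
        ∀ x, (∀ y, B x y = 0) → x = 0) :
    ∃ B : (⨁ i, Q i) →ₗ[ℂ] (⨁ i, Q i) →ₗ[ℂ] ℂ,
      (∀ x y, B ((X : Polynomial ℂ) • x) y = B x ((X : Polynomial ℂ) • y)) ∧
      ∀ x, (∀ y, B x y = 0) → x = 0 := by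
  choose B hX hsep using h
  refine ⟨∑ i, (B i).compl₁₂ (DirectSum.component ℂ ι Q i) (DirectSum.component ℂ ι Q i), ?_, ?_⟩
  · intro x y
    simp only [LinearMap.sum_apply, LinearMap.compl₁₂_apply]
    refine Finset.sum_congr rfl fun i _ => ?_
    have hc : ∀ z : ⨁ i, Q i, DirectSum.component ℂ ι Q i ((X : Polynomial ℂ) • z) =
        (X : Polynomial ℂ) • DirectSum.component ℂ ι Q i z := fun z => rfl
    rw [hc, hc, hX]
  · intro x hx
    refine DFinsupp.ext fun j => ?_
    refine hsep j (x j) fun z => ?_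
    have h1 := hx (DirectSum.lof ℂ ι Q j z)
    simp only [LinearMap.sum_apply, LinearMap.compl₁₂_apply] at h1
    rw [Finset.sum_eq_single j] at h1
    · simpa [← DirectSum.apply_eq_component] using h1
    · intro i _ hij
      have : DirectSum.component ℂ ι Q i (DirectSum.lof ℂ ι Q j z) = 0 := by
        simp [DirectSum.component.of, hij.symm]
      rw [this]
      simp
    · intro hj; exact absurd (Finset.mem_univ j) hj

end

noncomputable section
open Matrix

theorem exists_intertwiner (n : ℕ) (A : Matrix (Fin n) (Fin n) ℂ) :
    ∃ T : Matrix (Fin n) (Fin n) ℂ, IsUnit T ∧ Aᵀ * T = T * A := by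
  classical
  set f : (Fin n → ℂ) →ₗ[ℂ] (Fin n → ℂ) := A.mulVecLin with hf
  have htor : Module.IsTorsion (Polynomial ℂ) (Module.AEval' f) :=
    Module.AEval.isTorsion_of_finiteDimensional ℂ (Fin n → ℂ) f
  obtain ⟨ι, hι, p, hp, e, ⟨equiv⟩⟩ :=
    Module.equiv_directSum_of_isTorsion (R := Polynomial ℂ) (M := Module.AEval' f) htor
  -- pairing on each cyclic factor
  have hcyc : ∀ i : ι, ∃ B : (Polynomial ℂ ⧸ (Polynomial ℂ ∙ p i ^ e i)) →ₗ[ℂ]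
      (Polynomial ℂ ⧸ (Polynomial ℂ ∙ p i ^ e i)) →ₗ[ℂ] ℂ,
      (∀ x y, B ((X : Polynomial ℂ) • x) y = B x ((X : Polynomial ℂ) • y)) ∧
      ∀ x, (∀ y, B x y = 0) → x = 0 := by
    intro i
    have hne : p i ^ e i ≠ 0 := pow_ne_zero _ (hp i).ne_zero
    set g := (p i ^ e i) * Polynomial.C ((p i ^ e i).leadingCoeff)⁻¹ with hgdef
    have hmono : g.Monic := Polynomial.monic_mul_leadingCoeff_inv hne
    have hspan : (Polynomial ℂ ∙ p i ^ e i) = Ideal.span {g} := by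
      refine Ideal.span_singleton_eq_span_singleton.mpr ?_
      have hu : IsUnit (Polynomial.C ((p i ^ e i).leadingCoeff)⁻¹) :=
        Polynomial.isUnit_C.mpr (IsUnit.inv (isUnit_iff_ne_zero.mpr
          (Polynomial.leadingCoeff_ne_zero.mpr hne)))
      exact ⟨hu.unit, rfl⟩
    exact pairing_congr (Submodule.quotEquivOfEq _ _ hspan) (cyclic_pairing g hmono)
  have hds := pairing_directSum (fun i => Polynomial ℂ ⧸ (Polynomial ℂ ∙ p i ^ e i)) hcyc
  obtain ⟨B, hX, hsep⟩ := pairing_congr equiv hds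
  -- transfer to `Fin n → ℂ`
  set of := Module.AEval.of ℂ (Fin n → ℂ) f with hof
  set B' : (Fin n → ℂ) →ₗ[ℂ] (Fin n → ℂ) →ₗ[ℂ] ℂ :=
    B.compl₁₂ of.toLinearMap of.toLinearMap with hB'
  have hB'X : ∀ x y, B' (A *ᵥ x) y = B' x (A *ᵥ y) := by
    intro x y
    have h1 : ∀ z : Fin n → ℂ, of (A *ᵥ z) = (X : Polynomial ℂ) • of z := by
      intro z
      rw [Module.AEval.X_smul_of]
      congr 1
    simp only [hB', LinearMap.compl₁₂_apply, LinearEquiv.coe_coe]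
    rw [h1, h1, hX]
  have hB'sep : ∀ x, (∀ y, B' x y = 0) → x = 0 := by
    intro x hx
    have h0 : of x = 0 := hsep (of x) fun y => by
      obtain ⟨y', rfl⟩ := of.surjective y
      simpa [hB'] using hx y'
    simpa using of.injective (by simpa using h0)
  -- the matrix of the pairing
  set T := LinearMap.toMatrix₂' ℂ B' with hT
  have hBT : ∀ x y, B' x y = x ⬝ᵥ T *ᵥ y := by
    intro x y
    conv_lhs => rw [← Matrix.toLinearMap₂'_toMatrix' (R := ℂ) B']
    rw [Matrix.toLinearMap₂'_apply']
  refine ⟨T, ?_, ?_⟩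
  · have hnd : T.SeparatingLeft := LinearMap.SeparatingLeft.toMatrix₂' hB'sep
    exact (Matrix.isUnit_iff_isUnit_det T).mpr
      ((Matrix.separatingLeft_iff_det_ne_zero.mp hnd).isUnit)
  · have key : ∀ x y : Fin n → ℂ, x ⬝ᵥ (Aᵀ * T) *ᵥ y = x ⬝ᵥ (T * A) *ᵥ y := by
      intro x y
      have l1 : x ⬝ᵥ (Aᵀ * T) *ᵥ y = B' (A *ᵥ x) y := by
        rw [hBT, ← Matrix.mulVec_mulVec, Matrix.dotProduct_mulVec x Aᵀ,
          Matrix.vecMul_transpose]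
      have l2 : x ⬝ᵥ (T * A) *ᵥ y = B' x (A *ᵥ y) := by
        rw [hBT, ← Matrix.mulVec_mulVec]
      rw [l1, l2, hB'X]
    ext i j
    have := key (Pi.single i 1) (Pi.single j 1)
    simpa [Matrix.mulVec_single, dotProduct, Pi.single_apply, ite_mul] using this

end


/-- For every invertible `n × n` complex matrix `E`, the matrix
`S_E = E * (Eᵀ)⁻¹` is similar to its inverse. -/
theorem stmt_14 (n : ℕ) (E : Matrix (Fin n) (Fin n) ℂ) (hE : IsUnit E) :
    ∃ p : Matrix (Fin n) (Fin n) ℂ, IsUnit p ∧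
      (E * (Eᵀ)⁻¹)⁻¹ = p * (E * (Eᵀ)⁻¹) * p⁻¹ := by
  classical
  set S := E * (Eᵀ)⁻¹ with hS
  have hdetE : IsUnit E.det := (Matrix.isUnit_iff_isUnit_det E).mp hE
  have hdetET : IsUnit (Eᵀ).det := by rwa [Matrix.det_transpose]
  have hET : IsUnit Eᵀ := (Matrix.isUnit_iff_isUnit_det Eᵀ).mpr hdetET
  obtain ⟨T, hTu, hTS⟩ := exists_intertwiner n S
  have hdetT : IsUnit T.det := (Matrix.isUnit_iff_isUnit_det T).mp hTu
  refine ⟨Eᵀ * T, hET.mul hTu, ?_⟩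
  have hStr : Sᵀ = E⁻¹ * Eᵀ := by
    rw [hS, Matrix.transpose_mul, Matrix.transpose_nonsing_inv, Matrix.transpose_transpose]
  have hSinv : S⁻¹ = Eᵀ * E⁻¹ := by
    rw [hS, Matrix.mul_inv_rev, Matrix.nonsing_inv_nonsing_inv _ hdetET]
  rw [hSinv, Matrix.mul_inv_rev]
  calc Eᵀ * E⁻¹ = Eᵀ * (E⁻¹ * Eᵀ) * (Eᵀ)⁻¹ := by
        rw [← Matrix.mul_assoc, Matrix.mul_assoc (Eᵀ * E⁻¹), Matrix.mul_nonsing_inv _ hdetET,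
          Matrix.mul_one]
    _ = Eᵀ * (T * S) * (T⁻¹ * (Eᵀ)⁻¹) := by
        rw [← hTS, ← hStr]
        have hTT : T * T⁻¹ = 1 := Matrix.mul_nonsing_inv _ hdetT
        calc Eᵀ * Sᵀ * (Eᵀ)⁻¹ = Eᵀ * Sᵀ * (T * T⁻¹) * (Eᵀ)⁻¹ := by
              rw [hTT, Matrix.mul_one]
          _ = Eᵀ * (Sᵀ * T) * (T⁻¹ * (Eᵀ)⁻¹) := by simp only [Matrix.mul_assoc]
    _ = Eᵀ * T * S * (T⁻¹ * (Eᵀ)⁻¹) := by simp only [Matrix.mul_assoc]
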